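/- Let q be a prime power and let ℓ be an odd prime that does not divide q(q² − 1). Then the Sylow ℓ-subgroups of SU₄(q) are cyclic. -/

import Mathlib

open Polynomial Matrix Finset

set_option linter.unusedSectionVars false
set_option maxHeartbeats 1000000

namespace SU4Aux

lemma pow_mod_eq {M : Type*} [Monoid M] {a : M} {n : ℕ} (h : a ^ n = 1) (N : ℕ) :
    a ^ N = a ^ (N % n) := by
  conv_lhs => rw [← Nat.div_add_mod N n, pow_add, pow_mul, h, one_pow, one_mul]

variable {L : Type*} [Field L] [DecidableEq L]

section Roots

variable (L) in
/-- The set of `n`-th roots of unity in `L`. -/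
noncomputable def Rset (n : ℕ) : Finset L := (X ^ n - C 1 : L[X]).roots.toFinset

variable {n : ℕ} (hn : (n : L) ≠ 0)
include hn

lemma n_ne_zero' : n ≠ 0 := by rintro rfl; simp at hn

lemma Xn_monic : (X ^ n - C 1 : L[X]).Monic := monic_X_pow_sub_C 1 (n_ne_zero' hn)

lemma Xn_sep : (X ^ n - C 1 : L[X]).Separable := separable_X_pow_sub_C 1 hn one_ne_zero

lemma mem_Rset {α : L} : α ∈ Rset L n ↔ α ^ n = 1 := by
  rw [Rset, Multiset.mem_toFinset, mem_roots (Xn_monic hn).ne_zero, IsRoot.def]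
  simp [sub_eq_zero]

lemma one_mem_Rset : (1 : L) ∈ Rset L n := (mem_Rset hn).mpr (one_pow n)

lemma Rset_nonempty : (Rset L n).Nonempty := ⟨1, one_mem_Rset hn⟩

variable [IsAlgClosed L]

lemma card_Rset : (Rset L n).card = n := by
  rw [Rset, Multiset.toFinset_card_of_nodup (nodup_roots (Xn_sep hn)),
    splits_iff_card_roots.mp (IsAlgClosed.splits _), natDegree_X_pow_sub_C]

lemma prod_Rset : ∏ α ∈ Rset L n, (X - C α) = (X ^ n - C 1 : L[X]) := by
  have h := (IsAlgClosed.splits _).eq_prod_roots_of_monic (Xn_monic hn)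
  rw [Finset.prod_eq_multiset_prod, Rset, Multiset.toFinset_val,
    Multiset.Nodup.dedup (nodup_roots (Xn_sep hn)), ← h]

end Roots

section Lag

variable (L) in
/-- Lagrange interpolation basis polynomial at the `n`-th roots of unity. -/
noncomputable def lag (n : ℕ) (α : L) : L[X] := Lagrange.basis (Rset L n) id α

variable {n : ℕ} (hn : (n : L) ≠ 0)
include hn

lemma eval_lag_self {α : L} (hα : α ∈ Rset L n) : (lag L n α).eval α = 1 :=
  Lagrange.eval_basis_self (Set.injOn_id _) hα

lemma eval_lag_ne {α β : L} (hab : α ≠ β) (hβ : β ∈ Rset L n) : (lag L n α).eval β = 0 :=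
  Lagrange.eval_basis_of_ne (v := id) hab hβ

lemma sum_lag : ∑ α ∈ Rset L n, lag L n α = 1 :=
  Lagrange.sum_basis (Set.injOn_id _) (Rset_nonempty hn)

lemma X_sub_mul_lag [IsAlgClosed L] {α : L} (hα : α ∈ Rset L n) :
    ∃ c : L, (X - C α) * lag L n α = C c * (X ^ n - C 1) := by
  refine ⟨∏ γ ∈ (Rset L n).erase α, (α - γ)⁻¹, ?_⟩
  have hb : lag L n α
      = C (∏ γ ∈ (Rset L n).erase α, (α - γ)⁻¹) * ∏ γ ∈ (Rset L n).erase α, (X - C γ) := by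
    rw [lag]
    unfold Lagrange.basis Lagrange.basisDivisor
    simp only [id_eq]
    rw [Finset.prod_mul_distrib, map_prod]
  rw [hb, ← prod_Rset hn, ← Finset.mul_prod_erase _ _ hα]
  ring

end Lag

section MatrixLemmas

variable {m : Type} [Fintype m] [DecidableEq m]

lemma pow_mulVec {A : Matrix m m L} {v : m → L} {μ : L} (hv : A *ᵥ v = μ • v) (k : ℕ) :
    A ^ k *ᵥ v = μ ^ k • v := by
  induction k with
  | zero => simp
  | succ k ih =>
      have h : A ^ (k + 1) *ᵥ v = A ^ k *ᵥ (A *ᵥ v) := by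
        rw [Matrix.mulVec_mulVec, ← pow_succ]
      rw [h, hv, Matrix.mulVec_smul, ih, smul_smul, ← pow_succ']

lemma aeval_mulVec {A : Matrix m m L} {v : m → L} {μ : L} (hv : A *ᵥ v = μ • v) (p : L[X]) :
    (aeval A p) *ᵥ v = p.eval μ • v := by
  induction p using Polynomial.induction_on' with
  | add p q hp hq => rw [map_add, Matrix.add_mulVec, hp, hq, eval_add, add_smul]
  | monomial k a =>
      rw [aeval_monomial, eval_monomial, Algebra.algebraMap_eq_smul_one, smul_mul_assoc,
        one_mul, Matrix.smul_mulVec, pow_mulVec hv, smul_smul]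

lemma commute_aeval {A B : Matrix m m L} (h : Commute A B) (p : L[X]) :
    Commute A (aeval B p) := by
  induction p using Polynomial.induction_on' with
  | add p q hp hq => rw [map_add]; exact hp.add_right hq
  | monomial k a =>
      rw [aeval_monomial, Algebra.algebraMap_eq_smul_one, smul_mul_assoc, one_mul]
      exact (h.pow_right k).smul_right a

lemma aeval_transpose (A : Matrix m m L) (p : L[X]) : aeval Aᵀ p = (aeval A p)ᵀ := by
  induction p using Polynomial.induction_on' with
  | add p q hp hq => rw [map_add, map_add, transpose_add, hp, hq]
  | monomial k a =>
      rw [aeval_monomial, aeval_monomial]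
      simp [smul_mul_assoc, Matrix.transpose_smul, Matrix.transpose_pow,
        Algebra.algebraMap_eq_smul_one (A := Matrix m m L)]

lemma mulVec_map (φ : L →+* L) (A : Matrix m m L) (v : m → L) :
    (A.map φ) *ᵥ (φ ∘ v) = φ ∘ (A *ᵥ v) := by
  ext i
  simp [Matrix.mulVec, dotProduct, map_sum, Function.comp, Matrix.map_apply]

lemma exists_mulVec_ne_zero {A : Matrix m m L} (h : A ≠ 0) : ∃ v, A *ᵥ v ≠ 0 := by
  by_contra hc
  push_neg at hc
  apply h
  ext i j
  have := congrFun (hc (Pi.single j 1)) i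
  simpa using this

section Proj

variable {n : ℕ}

variable (L) in
/-- Spectral projector of a matrix `A` with `A ^ n = 1` onto the `α`-eigenspace. -/
noncomputable def projm (n : ℕ) (A : Matrix m m L) (α : L) : Matrix m m L := aeval A (lag L n α)

variable (hn : (n : L) ≠ 0) [IsAlgClosed L] {A : Matrix m m L}
include hn

lemma sum_projm (A : Matrix m m L) : ∑ α ∈ Rset L n, projm L n A α = 1 := by
  simp only [projm]
  rw [← map_sum (aeval A), sum_lag hn, _root_.map_one]

variable (hA : A ^ n = 1)
include hA

lemma sub_mul_projm {α : L} (hα : α ∈ Rset L n) :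
    (A - α • 1) * projm L n A α = 0 := by
  obtain ⟨c, hc⟩ := X_sub_mul_lag hn hα
  have h2 := congrArg (aeval A) hc
  simp only [_root_.map_mul, map_sub, aeval_X, aeval_C, aeval_X_pow, _root_.map_one,
    Algebra.algebraMap_eq_smul_one, hA, sub_self, mul_zero] at h2
  simp only [projm]
  exact h2

lemma mul_projm {α : L} (hα : α ∈ Rset L n) :
    A * projm L n A α = α • projm L n A α := by
  have h := sub_mul_projm hn hA hα
  rw [sub_mul, smul_mul_assoc, one_mul, sub_eq_zero] at h
  exact h

lemma pow_mul_projm {α : L} (hα : α ∈ Rset L n) (k : ℕ) :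
    A ^ k * projm L n A α = α ^ k • projm L n A α := by
  induction k with
  | zero => simp
  | succ k ih =>
      rw [pow_succ', Matrix.mul_assoc, ih, Matrix.mul_smul, mul_projm hn hA hα, smul_smul,
        ← pow_succ]

end Proj

end MatrixLemmas


section Crux

variable [IsAlgClosed L]

set_option maxHeartbeats 2000000 in
lemma crux_L (ℓ q : ℕ) [hpℓ : Fact ℓ.Prime] (hℓ5 : 5 ≤ ℓ) (hq1 : 1 ≤ q)
    (hℓL : ((ℓ : ℕ) : L) ≠ 0)
    (hq : ¬ ℓ ∣ q) (hq2 : ¬ ℓ ∣ q ^ 2 - 1) (hq1' : ¬ ℓ ∣ q + 1)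
    (φ : L →+* L) (hφ : ∀ a : L, φ a = a ^ q)
    (A B : Matrix (Fin 4) (Fin 4) L)
    (hAu : (A.map φ)ᵀ * A = 1) (hBu : (B.map φ)ᵀ * B = 1)
    (hAB : A * B = B * A) (hA : A ^ ℓ = 1) (hB : B ^ ℓ = 1)
    (hfaith : ∀ i j : ℕ, i < ℓ → j < ℓ → A ^ i * B ^ j = 1 → i = 0 ∧ j = 0) : False := by
  classical
  have hℓ1 : 1 < ℓ := hpℓ.out.one_lt
  have hkill : ∀ t : ℕ, ¬ ℓ ∣ t → ∀ u : L, u ^ ℓ = 1 → u ^ t = 1 → u = 1 := by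
    intro t ht u hu1 hu2
    have h1 : orderOf u ∣ ℓ := orderOf_dvd_of_pow_eq_one hu1
    have h2 : orderOf u ∣ t := orderOf_dvd_of_pow_eq_one hu2
    have hc : Nat.gcd ℓ t = 1 := (Nat.Prime.coprime_iff_not_dvd hpℓ.out).mpr ht
    have h3 : orderOf u ∣ 1 := hc ▸ Nat.dvd_gcd h1 h2
    exact orderOf_eq_one_iff.mp (Nat.dvd_one.mp h3)
  have hroots : ∀ u : L, u ^ ℓ = 1 → u ≠ 0 := by
    intro u hu h0
    rw [h0, zero_pow (by omega : ℓ ≠ 0)] at hu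
    exact zero_ne_one hu
  have hσroot : ∀ u : L, u ^ ℓ = 1 → ((u ^ q)⁻¹) ^ ℓ = 1 := by
    intro u hu
    rw [inv_pow, pow_right_comm, hu, one_pow, inv_one]
  -- joint projectors
  set Q : L × L → Matrix (Fin 4) (Fin 4) L :=
    fun χ => projm L ℓ A χ.1 * projm L ℓ B χ.2 with hQdef
  have hABc : Commute A B := hAB
  have hcomm1 : ∀ p q : L[X], Commute (aeval A p) (aeval B q) := fun p q =>
    commute_aeval ((commute_aeval hABc.symm p).symm) q
  have hQsum : ∑ χ ∈ (Rset L ℓ) ×ˢ (Rset L ℓ), Q χ = 1 := by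
    rw [Finset.sum_product, ← Finset.sum_mul_sum, sum_projm hℓL A, sum_projm hℓL B, one_mul]
  have hQA : ∀ χ : L × L, χ ∈ (Rset L ℓ) ×ˢ (Rset L ℓ) → ∀ i : ℕ,
      A ^ i * Q χ = χ.1 ^ i • Q χ := by
    intro χ hχ i
    show A ^ i * (projm L ℓ A χ.1 * projm L ℓ B χ.2) = _
    rw [← Matrix.mul_assoc, pow_mul_projm hℓL hA (Finset.mem_product.mp hχ).1,
      smul_mul_assoc]
  have hQB : ∀ χ : L × L, χ ∈ (Rset L ℓ) ×ˢ (Rset L ℓ) → ∀ j : ℕ,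
      B ^ j * Q χ = χ.2 ^ j • Q χ := by
    intro χ hχ j
    have hc : Commute (aeval B (X ^ j : L[X])) (aeval A (lag L ℓ χ.1)) :=
      (hcomm1 (lag L ℓ χ.1) (X ^ j)).symm
    rw [aeval_X_pow] at hc
    show B ^ j * (projm L ℓ A χ.1 * projm L ℓ B χ.2) = _
    rw [← Matrix.mul_assoc,
      show B ^ j * projm L ℓ A χ.1 = projm L ℓ A χ.1 * B ^ j from hc,
      Matrix.mul_assoc, pow_mul_projm hℓL hB (Finset.mem_product.mp hχ).2, Matrix.mul_smul]
  have hspan : ∀ i j : ℕ,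
      (∀ χ ∈ (Rset L ℓ) ×ˢ (Rset L ℓ), Q χ ≠ 0 → χ.1 ^ i * χ.2 ^ j = 1) →
      A ^ i * B ^ j = 1 := by
    intro i j hall
    have h1 : A ^ i * B ^ j = ∑ χ ∈ (Rset L ℓ) ×ˢ (Rset L ℓ), A ^ i * B ^ j * Q χ := by
      rw [← Finset.mul_sum, hQsum, mul_one]
    have h2 : ∀ χ ∈ (Rset L ℓ) ×ˢ (Rset L ℓ), A ^ i * B ^ j * Q χ = Q χ := by
      intro χ hχ
      rw [Matrix.mul_assoc, hQB χ hχ j, Matrix.mul_smul, hQA χ hχ i, smul_smul]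
      by_cases hQ0 : Q χ = 0
      · rw [hQ0, smul_zero]
      · rw [mul_comm, hall χ hχ hQ0, one_smul]
    rw [h1, Finset.sum_congr rfl h2, hQsum]
  have hS : ∀ i j : ℕ, i < ℓ → j < ℓ → ¬(i = 0 ∧ j = 0) →
      ∃ χ ∈ (Rset L ℓ) ×ˢ (Rset L ℓ), Q χ ≠ 0 ∧ χ.1 ^ i * χ.2 ^ j ≠ 1 := by
    intro i j hi hj hij
    by_contra hcon
    push_neg at hcon
    exact hij (hfaith i j hi hj (hspan i j hcon))
  have hvec : ∀ χ : L × L, χ ∈ (Rset L ℓ) ×ˢ (Rset L ℓ) → Q χ ≠ 0 →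
      ∃ u : Fin 4 → L, u ≠ 0 ∧ A *ᵥ u = χ.1 • u ∧ B *ᵥ u = χ.2 • u := by
    intro χ hχ hQχ
    obtain ⟨v, hv⟩ := exists_mulVec_ne_zero hQχ
    refine ⟨Q χ *ᵥ v, hv, ?_, ?_⟩
    · have h := hQA χ hχ 1
      rw [pow_one, pow_one] at h
      rw [Matrix.mulVec_mulVec, h, Matrix.smul_mulVec]
    · have h := hQB χ hχ 1
      rw [pow_one, pow_one] at h
      rw [Matrix.mulVec_mulVec, h, Matrix.smul_mulVec]
  have hdelta : ∀ χ : L × L, ∀ (u : Fin 4 → L) (a b : L),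
      A *ᵥ u = a • u → B *ᵥ u = b • u →
      Q χ *ᵥ u = ((lag L ℓ χ.1).eval a * (lag L ℓ χ.2).eval b) • u := by
    intro χ u a b hu1 hu2
    show (projm L ℓ A χ.1 * projm L ℓ B χ.2) *ᵥ u = _
    rw [← Matrix.mulVec_mulVec]
    simp only [projm]
    rw [aeval_mulVec hu2, Matrix.mulVec_smul, aeval_mulVec hu1, smul_smul, mul_comm]
  set 𝒳 : Finset (L × L) := ((Rset L ℓ) ×ˢ (Rset L ℓ)).filter (fun χ => Q χ ≠ 0) with h𝒳
  have hXroot : ∀ χ : L × L, χ ∈ 𝒳 → χ.1 ^ ℓ = 1 ∧ χ.2 ^ ℓ = 1 := by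
    intro χ hχ
    obtain ⟨hm, _⟩ := Finset.mem_filter.mp hχ
    obtain ⟨h1, h2⟩ := Finset.mem_product.mp hm
    exact ⟨(mem_Rset hℓL).mp h1, (mem_Rset hℓL).mp h2⟩
  -- cardinality bound
  have hcard : 𝒳.card ≤ 4 := by
    have hv : ∀ χ : {x // x ∈ 𝒳},
        ∃ u : Fin 4 → L, u ≠ 0 ∧ A *ᵥ u = (χ : L × L).1 • u ∧ B *ᵥ u = (χ : L × L).2 • u := by
      intro χ
      obtain ⟨h1, h2⟩ := Finset.mem_filter.mp χ.2
      exact hvec _ h1 h2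
    choose u hu0 huA huB using hv
    have hind : LinearIndependent L u := by
      rw [Fintype.linearIndependent_iff]
      intro g hg χ₀
      have happ : ∑ χ : {x // x ∈ 𝒳}, g χ • (Q (χ₀ : L × L) *ᵥ u χ) = 0 := by
        have h3 := congrArg (fun w => (Q (χ₀ : L × L)).mulVecLin w) hg
        simpa [_root_.map_sum, Matrix.mulVecLin_apply, _root_.map_smul] using h3
      have hone : Q (χ₀ : L × L) *ᵥ u χ₀ = u χ₀ := by
        rw [hdelta _ _ _ _ (huA χ₀) (huB χ₀),
          eval_lag_self hℓL (Finset.mem_product.mp (Finset.mem_filter.mp χ₀.2).1).1,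
          eval_lag_self hℓL (Finset.mem_product.mp (Finset.mem_filter.mp χ₀.2).1).2,
          one_mul, one_smul]
      have hzero : ∀ χ : {x // x ∈ 𝒳}, χ ≠ χ₀ → Q (χ₀ : L × L) *ᵥ u χ = 0 := by
        intro χ hne
        rw [hdelta _ _ _ _ (huA χ) (huB χ)]
        have hne' : (χ : L × L) ≠ (χ₀ : L × L) := fun h => hne (Subtype.ext h)
        have : (χ₀ : L × L).1 ≠ (χ : L × L).1 ∨ (χ₀ : L × L).2 ≠ (χ : L × L).2 := by
          by_contra hcc
          push_neg at hcc
          exact hne' (Prod.ext hcc.1.symm hcc.2.symm)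
        rcases this with h | h
        · rw [eval_lag_ne hℓL h (Finset.mem_product.mp (Finset.mem_filter.mp χ.2).1).1,
            zero_mul, zero_smul]
        · rw [eval_lag_ne hℓL h (Finset.mem_product.mp (Finset.mem_filter.mp χ.2).1).2,
            mul_zero, zero_smul]
      rw [Finset.sum_eq_single χ₀ (fun χ _ hne => by rw [hzero χ hne, smul_zero])
        (fun h => absurd (Finset.mem_univ χ₀) h), hone] at happ
      exact (smul_eq_zero.mp happ).resolve_right (hu0 χ₀)
    have hb := LinearIndependent.fintype_card_le_finrank hind
    rw [Module.finrank_fintype_fun_eq_card, Fintype.card_fin, Fintype.card_coe] at hb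
    exact hb
  -- closure under χ ↦ ((χ.1 ^ q)⁻¹, (χ.2 ^ q)⁻¹)
  have hclosure : ∀ χ : L × L, χ ∈ 𝒳 → (((χ.1 ^ q)⁻¹, (χ.2 ^ q)⁻¹) : L × L) ∈ 𝒳 := by
    intro χ hχ
    obtain ⟨hmem, hQne⟩ := Finset.mem_filter.mp hχ
    obtain ⟨hα, hβ⟩ := Finset.mem_product.mp hmem
    have hαr : χ.1 ^ ℓ = 1 := (mem_Rset hℓL).mp hα
    have hβr : χ.2 ^ ℓ = 1 := (mem_Rset hℓL).mp hβ
    obtain ⟨u, hu0, huA, huB⟩ := hvec χ hmem hQne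
    set w : Fin 4 → L := φ ∘ u with hw
    have hw0 : w ≠ 0 := by
      intro h0
      apply hu0
      ext i
      have h1 := congrFun h0 i
      simp only [hw, Function.comp_apply, Pi.zero_apply] at h1
      exact φ.injective (by simpa using h1)
    have key : ∀ (M : Matrix (Fin 4) (Fin 4) L) (a : L), a ≠ 0 →
        (M.map φ)ᵀ * M = 1 → M *ᵥ u = a • u → Mᵀ *ᵥ w = (a ^ q)⁻¹ • w := by
      intro M a ha hMu hMv
      have hmap : (M.map φ) *ᵥ w = (a ^ q) • w := by
        rw [hw, mulVec_map, hMv]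
        ext i
        simp only [Function.comp_apply, Pi.smul_apply, smul_eq_mul, hφ, mul_pow]
      have hTA : Mᵀ * (M.map φ) = 1 := by
        have h4 := congrArg Matrix.transpose hMu
        rwa [Matrix.transpose_mul, Matrix.transpose_transpose, Matrix.transpose_one] at h4
      have h5 : Mᵀ *ᵥ ((M.map φ) *ᵥ w) = w := by
        rw [Matrix.mulVec_mulVec, hTA, Matrix.one_mulVec]
      rw [hmap, Matrix.mulVec_smul] at h5
      have hq0 : a ^ q ≠ 0 := pow_ne_zero _ ha
      calc Mᵀ *ᵥ w = (a ^ q)⁻¹ • (a ^ q • (Mᵀ *ᵥ w)) := by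
            rw [smul_smul, inv_mul_cancel₀ hq0, one_smul]
        _ = (a ^ q)⁻¹ • w := by rw [h5]
    have hAw := key A χ.1 (hroots _ hαr) hAu huA
    have hBw := key B χ.2 (hroots _ hβr) hBu huB
    have hσα : (χ.1 ^ q)⁻¹ ∈ Rset L ℓ := (mem_Rset hℓL).mpr (hσroot _ hαr)
    have hσβ : (χ.2 ^ q)⁻¹ ∈ Rset L ℓ := (mem_Rset hℓL).mpr (hσroot _ hβr)
    have hAt : Aᵀ ^ ℓ = 1 := by rw [← Matrix.transpose_pow, hA, Matrix.transpose_one]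
    have hBt : Bᵀ ^ ℓ = 1 := by rw [← Matrix.transpose_pow, hB, Matrix.transpose_one]
    have hQ'w : (projm L ℓ Aᵀ (χ.1 ^ q)⁻¹ * projm L ℓ Bᵀ (χ.2 ^ q)⁻¹) *ᵥ w = w := by
      rw [← Matrix.mulVec_mulVec]
      simp only [projm]
      rw [aeval_mulVec hBw, Matrix.mulVec_smul, aeval_mulVec hAw,
        eval_lag_self hℓL hσα, eval_lag_self hℓL hσβ, one_smul, one_smul]
    have hQ'ne : projm L ℓ Aᵀ (χ.1 ^ q)⁻¹ * projm L ℓ Bᵀ (χ.2 ^ q)⁻¹ ≠ 0 := by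
      intro h0
      rw [h0, Matrix.zero_mulVec] at hQ'w
      exact hw0 hQ'w.symm
    have htr : projm L ℓ Aᵀ (χ.1 ^ q)⁻¹ * projm L ℓ Bᵀ (χ.2 ^ q)⁻¹
        = (Q (((χ.1 ^ q)⁻¹, (χ.2 ^ q)⁻¹) : L × L))ᵀ := by
      show aeval Aᵀ (lag L ℓ (χ.1 ^ q)⁻¹) * aeval Bᵀ (lag L ℓ (χ.2 ^ q)⁻¹) = _
      rw [aeval_transpose, aeval_transpose, ← Matrix.transpose_mul]
      show _ = (aeval A (lag L ℓ (χ.1 ^ q)⁻¹) * aeval B (lag L ℓ (χ.2 ^ q)⁻¹))ᵀ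
      rw [hcomm1 (lag L ℓ (χ.1 ^ q)⁻¹) (lag L ℓ (χ.2 ^ q)⁻¹)]
    refine Finset.mem_filter.mpr ⟨Finset.mem_product.mpr ⟨hσα, hσβ⟩, ?_⟩
    intro h0
    rw [htr, h0] at hQ'ne
    exact hQ'ne (Matrix.transpose_zero)
  -- algebraic facts about the map χ ↦ χ^{-q}
  have hfix1 : ∀ a : L, a ^ ℓ = 1 → (a ^ q)⁻¹ = a → a = 1 := by
    intro a ha h
    have ha0 : a ≠ 0 := hroots a ha
    have h' : a ^ q = a⁻¹ := by rw [← inv_inv (a ^ q), h]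
    have h2 : a ^ (q + 1) = 1 := by rw [pow_succ, h', inv_mul_cancel₀ ha0]
    exact hkill (q + 1) hq1' a ha h2
  have hfix2 : ∀ a : L, a ^ ℓ = 1 → (((a ^ q)⁻¹) ^ q)⁻¹ = a → a = 1 := by
    intro a ha h
    have ha0 : a ≠ 0 := hroots a ha
    rw [inv_pow, inv_inv, ← pow_mul] at h
    have h3 : a ^ (q * q - 1) * a = 1 * a := by
      rw [one_mul, ← pow_succ, Nat.sub_add_cancel (by nlinarith : 1 ≤ q * q)]
      exact h
    have h2 : a ^ (q * q - 1) = 1 := mul_right_cancel₀ ha0 h3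
    have hq2' : ¬ ℓ ∣ q * q - 1 := by rwa [← pow_two]
    exact hkill _ hq2' a ha h2
  have hinjσ : ∀ a b : L, a ^ ℓ = 1 → b ^ ℓ = 1 → (a ^ q)⁻¹ = (b ^ q)⁻¹ → a = b := by
    intro a b ha hb h
    have hb0 : b ≠ 0 := hroots b hb
    have h1 : (a / b) ^ q = 1 := by
      rw [div_pow, inv_injective h, div_self (pow_ne_zero _ hb0)]
    have h2 : (a / b) ^ ℓ = 1 := by
      rw [div_pow, ha, hb, div_one]
    exact div_eq_one_iff_eq hb0 |>.mp (hkill q hq _ h2 h1)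
  have hHrel : ∀ χ : L × L, χ.1 ^ ℓ = 1 → χ.2 ^ ℓ = 1 → ∀ i j : ℕ,
      (((χ.1 ^ q)⁻¹) ^ i * ((χ.2 ^ q)⁻¹) ^ j = 1 ↔ χ.1 ^ i * χ.2 ^ j = 1) := by
    intro χ h1 h2 i j
    have hval : ((χ.1 ^ q)⁻¹) ^ i * ((χ.2 ^ q)⁻¹) ^ j = ((χ.1 ^ i * χ.2 ^ j) ^ q)⁻¹ := by
      rw [inv_pow, inv_pow, ← mul_inv, pow_right_comm, pow_right_comm χ.2, ← mul_pow]
    have huℓ : (χ.1 ^ i * χ.2 ^ j) ^ ℓ = 1 := by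
      rw [mul_pow, pow_right_comm, pow_right_comm χ.2, h1, h2, one_pow, one_pow, one_mul]
    constructor
    · intro h
      rw [hval, inv_eq_one] at h
      exact hkill q hq _ huℓ h
    · intro h
      rw [hval, h, one_pow, inv_one]
  -- a nontrivial character in 𝒳
  obtain ⟨χ₀, hχ₀S, hQ0, hχ₀1⟩ := hS 1 0 hℓ1 (by omega) (by simp)
  rw [pow_one, pow_zero, mul_one] at hχ₀1
  have hχ₀X : χ₀ ∈ 𝒳 := Finset.mem_filter.mpr ⟨hχ₀S, hQ0⟩
  obtain ⟨hr01, hr02⟩ := hXroot χ₀ hχ₀X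
  by_cases hall : ∀ χ : L × L, χ ∈ 𝒳 → (χ.1 ≠ 1 ∨ χ.2 ≠ 1) →
      ∀ i j : ℕ, (χ.1 ^ i * χ.2 ^ j = 1 ↔ χ₀.1 ^ i * χ₀.2 ^ j = 1)
  · -- find a nontrivial common relation (i, j) for χ₀
    obtain ⟨i, j, hi, hj, hij0, hrel⟩ :
        ∃ i j : ℕ, i < ℓ ∧ j < ℓ ∧ ¬(i = 0 ∧ j = 0) ∧ χ₀.1 ^ i * χ₀.2 ^ j = 1 := by
      by_cases hβ : χ₀.2 = 1
      · exact ⟨0, 1, by omega, hℓ1, by simp, by simp [hβ]⟩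
      · have hord : orderOf χ₀.2 = ℓ := orderOf_eq_prime hr02 hβ
        have himg : (Finset.range ℓ).image (χ₀.2 ^ ·) ⊆ Rset L ℓ := by
          intro x hx
          obtain ⟨t, _, rfl⟩ := Finset.mem_image.mp hx
          exact (mem_Rset hℓL).mpr (by rw [pow_right_comm, hr02, one_pow])
        have hinj : Set.InjOn (χ₀.2 ^ ·) ↑(Finset.range ℓ) := by
          intro x hx y hy hxy
          refine pow_injOn_Iio_orderOf ?_ ?_ hxy
          · simpa [hord] using hx
          · simpa [hord] using hy
        have hcardim : ((Finset.range ℓ).image (χ₀.2 ^ ·)).card = ℓ := by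
          rw [Finset.card_image_of_injOn hinj, Finset.card_range]
        have heq : (Finset.range ℓ).image (χ₀.2 ^ ·) = Rset L ℓ :=
          Finset.eq_of_subset_of_card_le himg (by rw [card_Rset hℓL, hcardim])
        have hα' : χ₀.1 ∈ (Finset.range ℓ).image (χ₀.2 ^ ·) := by
          rw [heq]
          exact (Finset.mem_product.mp hχ₀S).1
        obtain ⟨t, ht, hteq⟩ := Finset.mem_image.mp hα'
        rw [Finset.mem_range] at ht
        have ht0 : t ≠ 0 := by
          rintro rfl
          rw [pow_zero] at hteq
          exact hχ₀1 hteq.symm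
        refine ⟨1, ℓ - t, hℓ1, by omega, by simp, ?_⟩
        rw [pow_one, ← hteq, ← pow_add, show t + (ℓ - t) = ℓ by omega]
        exact hr02
    obtain ⟨χ, hχS, hQχ, hne⟩ := hS i j hi hj hij0
    have hχX : χ ∈ 𝒳 := Finset.mem_filter.mpr ⟨hχS, hQχ⟩
    by_cases htriv : χ.1 = 1 ∧ χ.2 = 1
    · exact hne (by rw [htriv.1, htriv.2, one_pow, one_pow, one_mul])
    · have hnt : χ.1 ≠ 1 ∨ χ.2 ≠ 1 := by tauto
      exact hne ((hall χ hχX hnt i j).mpr hrel)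
  · push_neg at hall
    obtain ⟨χ₁, hχ₁X, hχ₁nt, is, js, hdiff⟩ := hall
    obtain ⟨hr11, hr12⟩ := hXroot χ₁ hχ₁X
    set σf : L × L → L × L := fun χ => ((χ.1 ^ q)⁻¹, (χ.2 ^ q)⁻¹) with hσf
    -- memberships
    have hm01 : σf χ₀ ∈ 𝒳 := hclosure χ₀ hχ₀X
    have hm02 : σf (σf χ₀) ∈ 𝒳 := hclosure _ hm01
    have hm11 : σf χ₁ ∈ 𝒳 := hclosure χ₁ hχ₁X
    have hm12 : σf (σf χ₁) ∈ 𝒳 := hclosure _ hm11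
    -- the relation predicate is σ-invariant
    have hrelinv : ∀ χ : L × L, χ.1 ^ ℓ = 1 → χ.2 ^ ℓ = 1 →
        ((σf χ).1 ^ is * (σf χ).2 ^ js = 1 ↔ χ.1 ^ is * χ.2 ^ js = 1) := by
      intro χ h1 h2
      exact hHrel χ h1 h2 is js
    -- triple distinctness for a nontrivial χ
    have htriple : ∀ χ : L × L, χ ∈ 𝒳 → (χ.1 ≠ 1 ∨ χ.2 ≠ 1) →
        χ ≠ σf χ ∧ χ ≠ σf (σf χ) ∧ σf χ ≠ σf (σf χ) := by
      intro χ hχ hnt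
      obtain ⟨h1, h2⟩ := hXroot χ hχ
      have hne1 : χ ≠ σf χ := by
        intro h
        have e1 : (χ.1 ^ q)⁻¹ = χ.1 := (congrArg Prod.fst h).symm
        have e2 : (χ.2 ^ q)⁻¹ = χ.2 := (congrArg Prod.snd h).symm
        rcases hnt with h' | h'
        · exact h' (hfix1 χ.1 h1 e1)
        · exact h' (hfix1 χ.2 h2 e2)
      refine ⟨hne1, ?_, ?_⟩
      · intro h
        have e1 : (((χ.1 ^ q)⁻¹) ^ q)⁻¹ = χ.1 := (congrArg Prod.fst h).symm
        have e2 : (((χ.2 ^ q)⁻¹) ^ q)⁻¹ = χ.2 := (congrArg Prod.snd h).symm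
        rcases hnt with h' | h'
        · exact h' (hfix2 χ.1 h1 e1)
        · exact h' (hfix2 χ.2 h2 e2)
      · intro h
        apply hne1
        have e1 : (χ.1 ^ q)⁻¹ = ((χ.1 ^ q)⁻¹ ^ q)⁻¹ := congrArg Prod.fst h
        have e2 : (χ.2 ^ q)⁻¹ = ((χ.2 ^ q)⁻¹ ^ q)⁻¹ := congrArg Prod.snd h
        have g1 : χ.1 = (χ.1 ^ q)⁻¹ := hinjσ χ.1 ((χ.1 ^ q)⁻¹) h1 (hσroot _ h1) e1
        have g2 : χ.2 = (χ.2 ^ q)⁻¹ := hinjσ χ.2 ((χ.2 ^ q)⁻¹) h2 (hσroot _ h2) e2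
        exact Prod.ext g1 g2
    have ht0 := htriple χ₀ hχ₀X (Or.inl hχ₀1)
    have ht1 := htriple χ₁ hχ₁X hχ₁nt
    -- relation values
    have hP00 : (σf χ₀).1 ^ is * (σf χ₀).2 ^ js = 1 ↔ χ₀.1 ^ is * χ₀.2 ^ js = 1 :=
      hrelinv χ₀ hr01 hr02
    have hP01 : (σf (σf χ₀)).1 ^ is * (σf (σf χ₀)).2 ^ js = 1 ↔ χ₀.1 ^ is * χ₀.2 ^ js = 1 :=
      (hrelinv (σf χ₀) (hσroot _ hr01) (hσroot _ hr02)).trans hP00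
    have hP10 : (σf χ₁).1 ^ is * (σf χ₁).2 ^ js = 1 ↔ χ₁.1 ^ is * χ₁.2 ^ js = 1 :=
      hrelinv χ₁ hr11 hr12
    have hP11 : (σf (σf χ₁)).1 ^ is * (σf (σf χ₁)).2 ^ js = 1 ↔ χ₁.1 ^ is * χ₁.2 ^ js = 1 :=
      (hrelinv (σf χ₁) (hσroot _ hr11) (hσroot _ hr12)).trans hP10
    -- cross distinctness
    have hcross : ∀ a b : L × L,
        (a.1 ^ is * a.2 ^ js = 1 ↔ χ₀.1 ^ is * χ₀.2 ^ js = 1) →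
        (b.1 ^ is * b.2 ^ js = 1 ↔ χ₁.1 ^ is * χ₁.2 ^ js = 1) → a ≠ b := by
      intro a b hha hhb hab
      subst hab
      rcases hdiff with ⟨h1, h0⟩ | ⟨h1, h0⟩
      · exact h0 (hha.mp (hhb.mpr h1))
      · exact h1 (hhb.mp (hha.mpr h0))
    have c00 : χ₀ ≠ χ₁ := hcross χ₀ χ₁ Iff.rfl Iff.rfl
    have c01 : χ₀ ≠ σf χ₁ := hcross _ _ Iff.rfl hP10
    have c02 : χ₀ ≠ σf (σf χ₁) := hcross _ _ Iff.rfl hP11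
    have c10 : σf χ₀ ≠ χ₁ := hcross _ _ hP00 Iff.rfl
    have c11 : σf χ₀ ≠ σf χ₁ := hcross _ _ hP00 hP10
    have c12 : σf χ₀ ≠ σf (σf χ₁) := hcross _ _ hP00 hP11
    have c20 : σf (σf χ₀) ≠ χ₁ := hcross _ _ hP01 Iff.rfl
    have c21 : σf (σf χ₀) ≠ σf χ₁ := hcross _ _ hP01 hP10
    have c22 : σf (σf χ₀) ≠ σf (σf χ₁) := hcross _ _ hP01 hP11
    obtain ⟨n01, n02, n12⟩ := ht0
    obtain ⟨m01, m02, m12⟩ := ht1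
    have hsub : ({χ₀, σf χ₀, σf (σf χ₀), χ₁, σf χ₁, σf (σf χ₁)} : Finset (L × L)) ⊆ 𝒳 := by
      intro x hx
      simp only [Finset.mem_insert, Finset.mem_singleton] at hx
      rcases hx with rfl | rfl | rfl | rfl | rfl | rfl
      exacts [hχ₀X, hm01, hm02, hχ₁X, hm11, hm12]
    have hcard6 : ({χ₀, σf χ₀, σf (σf χ₀), χ₁, σf χ₁, σf (σf χ₁)} : Finset (L × L)).card = 6 := by
      rw [Finset.card_insert_of_notMem (by simp [n01, n02, c00, c01, c02]),
        Finset.card_insert_of_notMem (by simp [n12, c10, c11, c12]),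
        Finset.card_insert_of_notMem (by simp [c20, c21, c22]),
        Finset.card_insert_of_notMem (by simp [m01, m02]),
        Finset.card_insert_of_notMem (by simp [m12]),
        Finset.card_singleton]
    have h6 : 6 ≤ 𝒳.card := by
      rw [← hcard6]
      exact Finset.card_le_card hsub
    omega

end Crux

section Nonab

variable [IsAlgClosed L]

set_option maxHeartbeats 1000000 in
lemma nonab_core (ℓ k : ℕ) [hpℓ : Fact ℓ.Prime] (hℓ5 : 5 ≤ ℓ) (hℓL : ((ℓ : ℕ) : L) ≠ 0)
    (A B C A' B' : Matrix (Fin 4) (Fin 4) L)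
    (hA' : A * A' = 1) (hA'2 : A' * A = 1) (hB' : B * B' = 1)
    (hrel : A * B = C * B * A)
    (hCA : C * A = A * C) (hCB : C * B = B * C)
    (hCN : C ^ (ℓ ^ k) = 1) (hC1 : C ≠ 1) : False := by
  classical
  set N := ℓ ^ k with hNdef
  have hN : ((N : ℕ) : L) ≠ 0 := by
    rw [hNdef]
    push_cast
    exact pow_ne_zero _ hℓL
  -- find an eigenvalue γ ≠ 1 of C with an eigenvector
  have hexists : ∃ γ ∈ Rset L N, γ ≠ 1 ∧ projm L N C γ ≠ 0 := by
    by_contra hcon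
    push_neg at hcon
    apply hC1
    have h1 : (1 : Matrix (Fin 4) (Fin 4) L) = projm L N C 1 := by
      rw [← sum_projm hN C]
      exact Finset.sum_eq_single 1 (fun γ hγ hne => hcon γ hγ hne)
        (fun h => absurd (one_mem_Rset hN) h)
    have h2 := mul_projm hN hCN (one_mem_Rset hN)
    rw [← h1, mul_one, one_smul] at h2
    exact h2
  obtain ⟨γ, hγR, hγ1, hPne⟩ := hexists
  have hγN : γ ^ N = 1 := (mem_Rset hN).mp hγR
  obtain ⟨v, hv⟩ := exists_mulVec_ne_zero hPne
  set u : Fin 4 → L := projm L N C γ *ᵥ v with hudef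
  have hCu : C *ᵥ u = γ • u := by
    rw [hudef, Matrix.mulVec_mulVec, mul_projm hN hCN hγR, Matrix.smul_mulVec]
  have hord : 5 ≤ orderOf γ := by
    have h1 : orderOf γ ∣ ℓ ^ k := orderOf_dvd_of_pow_eq_one hγN
    obtain ⟨j, hj, hjeq⟩ := (Nat.dvd_prime_pow hpℓ.out).mp h1
    have hj0 : j ≠ 0 := by
      rintro rfl
      rw [pow_zero] at hjeq
      exact hγ1 (orderOf_eq_one_iff.mp hjeq)
    calc 5 ≤ ℓ := hℓ5
      _ ≤ ℓ ^ j := Nat.le_self_pow hj0 ℓ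
      _ = orderOf γ := hjeq.symm
  -- eigenvector of B inside the γ-eigenspace of C
  set f : Module.End L (Fin 4 → L) := Matrix.mulVecLin C with hfdef
  set g : Module.End L (Fin 4 → L) := Matrix.mulVecLin B with hgdef
  set W := Module.End.eigenspace f γ with hWdef
  have huW : u ∈ W := by
    rw [hWdef, Module.End.mem_eigenspace_iff, hfdef, Matrix.mulVecLin_apply]
    exact hCu
  have hWnt : Nontrivial W := by
    refine ⟨⟨⟨u, huW⟩, 0, ?_⟩⟩
    intro h0
    exact hv (by simpa [hudef] using congrArg Subtype.val h0)
  have hstab : ∀ x ∈ W, g x ∈ W := by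
    intro x hx
    rw [hWdef, Module.End.mem_eigenspace_iff] at hx ⊢
    rw [hfdef, Matrix.mulVecLin_apply] at hx ⊢
    rw [hgdef, Matrix.mulVecLin_apply]
    rw [Matrix.mulVec_mulVec, hCB, ← Matrix.mulVec_mulVec, hx, Matrix.mulVec_smul]
  obtain ⟨β, hβ⟩ := Module.End.exists_eigenvalue (g.restrict hstab)
  obtain ⟨w0, hw0⟩ := hβ.exists_hasEigenvector
  have hw0mem := Module.End.hasEigenvector_iff.mp hw0
  have hBw : B *ᵥ (w0 : Fin 4 → L) = β • (w0 : Fin 4 → L) := by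
    have h1 : (g.restrict hstab) w0 = β • w0 := Module.End.mem_eigenspace_iff.mp hw0mem.1
    have h2 := congrArg Subtype.val h1
    rw [LinearMap.restrict_apply] at h2
    simpa [hgdef, Matrix.mulVecLin_apply] using h2
  have hCw : C *ᵥ (w0 : Fin 4 → L) = γ • (w0 : Fin 4 → L) := by
    have h1 : (w0 : Fin 4 → L) ∈ Module.End.eigenspace f γ := w0.2
    have h2 := Module.End.mem_eigenspace_iff.mp h1
    rwa [hfdef, Matrix.mulVecLin_apply] at h2
  have hw0ne : (w0 : Fin 4 → L) ≠ 0 := by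
    intro h0
    exact hw0mem.2 (Subtype.ext h0)
  have hB'2 : B' * B = 1 := mul_eq_one_comm.mp hB'
  have hβ0 : β ≠ 0 := by
    intro h0
    rw [h0, zero_smul] at hBw
    apply hw0ne
    calc (w0 : Fin 4 → L) = (B' * B) *ᵥ (w0 : Fin 4 → L) := by rw [hB'2, Matrix.one_mulVec]
      _ = B' *ᵥ (B *ᵥ (w0 : Fin 4 → L)) := by rw [Matrix.mulVec_mulVec]
      _ = 0 := by rw [hBw, Matrix.mulVec_zero]
  have hCAc : Commute C A := hCA
  have hA'A : Commute A A' := hA'.trans hA'2.symm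
  have hApow : ∀ t : ℕ, A ^ t * A' ^ t = 1 := by
    intro t
    rw [← Commute.mul_pow hA'A, hA', one_pow]
  have hA'pow : ∀ t : ℕ, A' ^ t * A ^ t = 1 := by
    intro t
    rw [← Commute.mul_pow hA'A.symm, hA'2, one_pow]
  have hrelk : ∀ t : ℕ, A ^ t * B = C ^ t * B * A ^ t := by
    intro t
    induction t with
    | zero => simp
    | succ t ih =>
        calc A ^ (t + 1) * B = A * (A ^ t * B) := by rw [pow_succ', Matrix.mul_assoc]
          _ = A * (C ^ t * B * A ^ t) := by rw [ih]
          _ = (A * C ^ t) * B * A ^ t := by simp only [Matrix.mul_assoc]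
          _ = (C ^ t * A) * B * A ^ t := by rw [(hCAc.symm.pow_right t).eq]
          _ = C ^ t * (A * B) * A ^ t := by simp only [Matrix.mul_assoc]
          _ = C ^ t * (C * B * A) * A ^ t := by rw [hrel]
          _ = C ^ (t + 1) * B * A ^ (t + 1) := by
              rw [pow_succ, pow_succ']
              simp only [Matrix.mul_assoc]
  have hBA' : ∀ t : ℕ, B * A' ^ t = A' ^ t * (C ^ t * B) := by
    intro t
    calc B * A' ^ t = (A' ^ t * A ^ t) * B * A' ^ t := by rw [hA'pow, Matrix.one_mul]
      _ = A' ^ t * ((A ^ t * B) * A' ^ t) := by simp only [Matrix.mul_assoc]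
      _ = A' ^ t * ((C ^ t * B * A ^ t) * A' ^ t) := by rw [hrelk]
      _ = A' ^ t * (C ^ t * B * (A ^ t * A' ^ t)) := by simp only [Matrix.mul_assoc]
      _ = A' ^ t * (C ^ t * B) := by rw [hApow, Matrix.mul_one]
  set uu : Fin 5 → (Fin 4 → L) := fun t => A' ^ (t : ℕ) *ᵥ (w0 : Fin 4 → L) with huu
  have huue : ∀ t : Fin 5, B *ᵥ uu t = (β * γ ^ (t : ℕ)) • uu t := by
    intro t
    rw [huu]
    simp only
    rw [Matrix.mulVec_mulVec, hBA' (t : ℕ), ← Matrix.mulVec_mulVec, ← Matrix.mulVec_mulVec,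
      hBw, Matrix.mulVec_smul, pow_mulVec hCw, smul_smul, Matrix.mulVec_smul]
  have huune : ∀ t : Fin 5, uu t ≠ 0 := by
    intro t h0
    have h1 : (A ^ (t : ℕ) * A' ^ (t : ℕ)) *ᵥ (w0 : Fin 4 → L) = A ^ (t : ℕ) *ᵥ 0 := by
      rw [← Matrix.mulVec_mulVec]
      rw [show A' ^ (t : ℕ) *ᵥ (w0 : Fin 4 → L) = 0 from h0]
    rw [hApow, Matrix.one_mulVec, Matrix.mulVec_zero] at h1
    exact hw0ne h1
  have hinj : Function.Injective (fun t : Fin 5 => β * γ ^ (t : ℕ)) := by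
    intro s t hst
    have h1 : γ ^ (s : ℕ) = γ ^ (t : ℕ) := mul_left_cancel₀ hβ0 hst
    have h2 := pow_injOn_Iio_orderOf (x := γ)
      (by simp only [Set.mem_Iio]; omega : (s : ℕ) ∈ Set.Iio (orderOf γ))
      (by simp only [Set.mem_Iio]; omega : (t : ℕ) ∈ Set.Iio (orderOf γ)) h1
    exact Fin.ext h2
  have hli : LinearIndependent L uu :=
    Module.End.eigenvectors_linearIndependent' (Matrix.mulVecLin B)
      (fun t : Fin 5 => β * γ ^ (t : ℕ)) hinj uu
      (fun t => Module.End.hasEigenvector_iff.mpr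
        ⟨Module.End.mem_eigenspace_iff.mpr
          (by rw [Matrix.mulVecLin_apply]; exact huue t), huune t⟩)
  have hb := LinearIndependent.fintype_card_le_finrank hli
  rw [Module.finrank_fintype_fun_eq_card, Fintype.card_fin, Fintype.card_fin] at hb
  omega

end Nonab

section Wrapper

set_option maxHeartbeats 2000000 in
lemma sylow_cyclic_of_rep {G : Type*} [Group G] [Finite G] (ℓ q : ℕ) [hpℓ : Fact ℓ.Prime]
    (hℓ5 : 5 ≤ ℓ) (hq1 : 1 ≤ q) [IsAlgClosed L]
    (hℓL : ((ℓ : ℕ) : L) ≠ 0) (hq : ¬ ℓ ∣ q) (hq2 : ¬ ℓ ∣ q ^ 2 - 1) (hq1' : ¬ ℓ ∣ q + 1)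
    (φ : L →+* L) (hφ : ∀ a : L, φ a = a ^ q)
    (hPG : IsPGroup ℓ G)
    (ψ : G →* Matrix (Fin 4) (Fin 4) L) (hinj : Function.Injective ψ)
    (hu : ∀ g : G, ((ψ g).map φ)ᵀ * (ψ g) = 1) : IsCyclic G := by
  classical
  letI : Fintype G := Fintype.ofFinite G
  have hℓ1 : 1 < ℓ := hpℓ.out.one_lt
  obtain ⟨kk, hkk⟩ := IsPGroup.iff_card.mp hPG
  rw [Nat.card_eq_fintype_card] at hkk
  -- step 1 : commutativity
  have hcomm : ∀ a b : G, a * b = b * a := by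
    by_contra hnc
    push_neg at hnc
    obtain ⟨a0, b0, hab0⟩ := hnc
    have hZ : Subgroup.center G ≠ ⊤ := by
      intro h
      exact hab0 (Subgroup.mem_center_iff.mp (h ▸ Subgroup.mem_top b0) a0)
    obtain ⟨x0, hx0⟩ : ∃ x0 : G, x0 ∉ Subgroup.center G := by
      by_contra h
      push_neg at h
      exact hZ ((Subgroup.eq_top_iff' (Subgroup.center G)).mpr h)
    haveI : Nontrivial (G ⧸ Subgroup.center G) := by
      refine ⟨⟨QuotientGroup.mk x0, 1, ?_⟩⟩
      rw [Ne, QuotientGroup.eq_one_iff]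
      exact hx0
    have hQpg := IsPGroup.to_quotient hPG (Subgroup.center G)
    haveI hZQ := IsPGroup.center_nontrivial hQpg
    obtain ⟨z, hz1⟩ := exists_ne (1 : Subgroup.center (G ⧸ Subgroup.center G))
    obtain ⟨b, hb⟩ := QuotientGroup.mk_surjective (z : G ⧸ Subgroup.center G)
    have hbZ : b ∉ Subgroup.center G := by
      intro h
      apply hz1
      have h1 : (z : G ⧸ Subgroup.center G) = 1 := by
        rw [← hb, QuotientGroup.eq_one_iff]
        exact h
      exact Subtype.ext (by rw [h1]; rfl)
    obtain ⟨a, ha⟩ : ∃ a : G, a * b ≠ b * a := by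
      by_contra h
      push_neg at h
      exact hbZ (Subgroup.mem_center_iff.mpr (fun g => h g))
    set c : G := a * b * a⁻¹ * b⁻¹ with hcdef
    have hc1 : c ≠ 1 := by
      intro h
      apply ha
      have h2 : a * b * a⁻¹ * b⁻¹ = 1 := h
      have h3 : a * b = b * a := by
        have := mul_eq_one_iff_eq_inv.mp h2
        calc a * b = (a * b * a⁻¹ * b⁻¹) * (b * a) := by group
          _ = 1 * (b * a) := by rw [h2]
          _ = b * a := one_mul _
      exact h3
    have hcZ : c ∈ Subgroup.center G := by
      rw [← QuotientGroup.eq_one_iff]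
      have hmk : (QuotientGroup.mk c : G ⧸ Subgroup.center G)
          = (QuotientGroup.mk a) * (QuotientGroup.mk b) * (QuotientGroup.mk a)⁻¹
            * (QuotientGroup.mk b)⁻¹ := rfl
      rw [hmk, hb]
      have hzc := Subgroup.mem_center_iff.mp z.2 (QuotientGroup.mk a)
      rw [hzc]
      group
    have hcmatA : c * a = a * c := (Subgroup.mem_center_iff.mp hcZ a).symm
    have hcmatB : c * b = b * c := (Subgroup.mem_center_iff.mp hcZ b).symm
    have hrelG : a * b = c * b * a := by
      rw [hcdef]
      group
    have hcN : c ^ (ℓ ^ kk) = 1 := by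
      rw [← hkk]
      exact pow_card_eq_one
    refine nonab_core (L := L) ℓ kk hℓ5 hℓL (ψ a) (ψ b) (ψ c) (ψ a⁻¹) (ψ b⁻¹)
      ?_ ?_ ?_ ?_ ?_ ?_ ?_ ?_
    · rw [← _root_.map_mul, mul_inv_cancel, _root_.map_one]
    · rw [← _root_.map_mul, inv_mul_cancel, _root_.map_one]
    · rw [← _root_.map_mul, mul_inv_cancel, _root_.map_one]
    · rw [← _root_.map_mul, ← _root_.map_mul, ← _root_.map_mul, hrelG]
    · rw [← _root_.map_mul, ← _root_.map_mul, hcmatA]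
    · rw [← _root_.map_mul, ← _root_.map_mul, hcmatB]
    · rw [← _root_.map_pow, hcN, _root_.map_one]
    · intro h
      exact hc1 (hinj (by rw [h, _root_.map_one]))
  -- step 2 : few elements of order dividing ℓ
  have hT1 : (Finset.univ.filter (fun a : G => a ^ ℓ = 1)).card ≤ ℓ := by
    by_contra hlt
    push_neg at hlt
    set T := Finset.univ.filter (fun a : G => a ^ ℓ = 1) with hT
    obtain ⟨x, hxT, hx1⟩ : ∃ x ∈ T, x ≠ 1 := by
      by_contra hcon
      push_neg at hcon
      have hsub : T ⊆ {1} := fun t ht => Finset.mem_singleton.mpr (hcon t ht)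
      have := Finset.card_le_card hsub
      rw [Finset.card_singleton] at this
      omega
    set S := (Finset.range ℓ).image (x ^ ·) with hS
    have hScard : S.card ≤ ℓ := le_trans Finset.card_image_le (by rw [Finset.card_range])
    obtain ⟨y, hyT, hyS⟩ : ∃ y ∈ T, y ∉ S := by
      by_contra hcon
      push_neg at hcon
      have := Finset.card_le_card hcon
      omega
    have hxl : x ^ ℓ = 1 := (Finset.mem_filter.mp hxT).2
    have hyl : y ^ ℓ = 1 := (Finset.mem_filter.mp hyT).2
    have hfaithG : ∀ i j : ℕ, i < ℓ → j < ℓ → x ^ i * y ^ j = 1 → i = 0 ∧ j = 0 := by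
      intro i j hi hj hij
      have hordx : orderOf x = ℓ := orderOf_eq_prime hxl hx1
      by_cases hj0 : j = 0
      · subst hj0
        rw [pow_zero, mul_one] at hij
        refine ⟨?_, rfl⟩
        by_contra hi0
        have hdvd := orderOf_dvd_of_pow_eq_one hij
        rw [hordx] at hdvd
        have := Nat.le_of_dvd (by omega) hdvd
        omega
      · exfalso
        apply hyS
        have h1 : (x ^ i)⁻¹ = y ^ j := inv_eq_of_mul_eq_one_right hij
        have hxinv : x⁻¹ = x ^ (ℓ - 1) := by
          apply inv_eq_of_mul_eq_one_right
          rw [← pow_succ', show ℓ - 1 + 1 = ℓ by omega]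
          exact hxl
        have h2 : y ^ j = x ^ ((ℓ - 1) * i) := by
          rw [← h1, ← inv_pow, hxinv, ← pow_mul]
        have hjcop : Nat.Coprime ℓ j :=
          (Nat.Prime.coprime_iff_not_dvd hpℓ.out).mpr
            (fun hd => by have := Nat.le_of_dvd (by omega) hd; omega)
        obtain ⟨s, -, hs⟩ := Nat.exists_mul_mod_eq_one_of_coprime hjcop.symm hℓ1
        have hys : y = y ^ (j * s) := by
          rw [pow_mod_eq hyl (j * s), hs, pow_one]
        have h3 : y = x ^ ((ℓ - 1) * i * s % ℓ) := by
          rw [hys, pow_mul, h2, ← pow_mul, ← pow_mod_eq hxl]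
        exact Finset.mem_image.mpr
          ⟨(ℓ - 1) * i * s % ℓ, Finset.mem_range.mpr (Nat.mod_lt _ (by omega)), h3.symm⟩
    have hxyc : x * y = y * x := hcomm x y
    exact crux_L ℓ q hℓ5 hq1 hℓL hq hq2 hq1' φ hφ (ψ x) (ψ y) (hu x) (hu y)
      (by rw [← _root_.map_mul, ← _root_.map_mul, hxyc])
      (by rw [← _root_.map_pow, hxl, _root_.map_one])
      (by rw [← _root_.map_pow, hyl, _root_.map_one])
      (fun i j hi hj hij => hfaithG i j hi hj
        (hinj (by rw [_root_.map_mul, _root_.map_pow, _root_.map_pow, hij, _root_.map_one])))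
  -- step 3 : elements of order dividing ℓ ^ m
  have hTm : ∀ m : ℕ, (Finset.univ.filter (fun a : G => a ^ (ℓ ^ m) = 1)).card ≤ ℓ ^ m := by
    intro m
    induction m with
    | zero =>
        have hsub : (Finset.univ.filter (fun a : G => a ^ (ℓ ^ 0) = 1)) ⊆ {1} := by
          intro t ht
          have := (Finset.mem_filter.mp ht).2
          rw [pow_zero, pow_one] at this
          exact Finset.mem_singleton.mpr this
        have := Finset.card_le_card hsub
        rw [Finset.card_singleton] at this
        simpa using this
    | succ m ih =>
        set S' := Finset.univ.filter (fun a : G => a ^ (ℓ ^ (m + 1)) = 1) with hS'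
        set Sm := Finset.univ.filter (fun a : G => a ^ (ℓ ^ m) = 1) with hSm
        have hbound := Finset.card_le_mul_card_image (f := fun a : G => a ^ ℓ) S' ℓ ?_
        · have himg : S'.image (fun a : G => a ^ ℓ) ⊆ Sm := by
            intro t ht
            obtain ⟨a, ha, rfl⟩ := Finset.mem_image.mp ht
            rw [hSm, Finset.mem_filter]
            refine ⟨Finset.mem_univ _, ?_⟩
            rw [← pow_mul, ← pow_succ']
            exact (Finset.mem_filter.mp ha).2
          calc S'.card ≤ ℓ * (S'.image (fun a : G => a ^ ℓ)).card := hbound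
            _ ≤ ℓ * Sm.card := Nat.mul_le_mul_left _ (Finset.card_le_card himg)
            _ ≤ ℓ * ℓ ^ m := Nat.mul_le_mul_left _ ih
            _ = ℓ ^ (m + 1) := (pow_succ' ℓ m).symm
        · intro b hb
          rcases Finset.eq_empty_or_nonempty (S'.filter (fun a => a ^ ℓ = b)) with h | h
          · rw [h, Finset.card_empty]; omega
          · obtain ⟨a0, ha0⟩ := h
            have hstep : (S'.filter (fun a => a ^ ℓ = b)).card
                ≤ (Finset.univ.filter (fun a : G => a ^ ℓ = 1)).card := by
              apply Finset.card_le_card_of_injOn (fun a => a * a0⁻¹)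
              · intro a ha
                rw [Finset.mem_coe, Finset.mem_filter]
                refine ⟨Finset.mem_univ _, ?_⟩
                have h1 : a ^ ℓ = b := (Finset.mem_filter.mp ha).2
                have h2 : a0 ^ ℓ = b := (Finset.mem_filter.mp ha0).2
                have hca0 : Commute a a0 := hcomm a a0
                have hcab : Commute a a0⁻¹ := hca0.inv_right
                rw [hcab.mul_pow, h1, inv_pow, h2, mul_inv_cancel]
              · intro p1 _ p2 _ hpe
                exact mul_right_cancel hpe
            exact le_trans hstep hT1
  -- step 4 : the cyclicity criterion
  have hall : ∀ n : ℕ, 0 < n → (Finset.univ.filter (fun a : G => a ^ n = 1)).card ≤ n := by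
    intro n hn
    set d := Nat.gcd n (ℓ ^ kk) with hd
    have hdn : d ∣ n := Nat.gcd_dvd_left _ _
    have hdl : d ∣ ℓ ^ kk := Nat.gcd_dvd_right _ _
    obtain ⟨m, hm, hmeq⟩ := (Nat.dvd_prime_pow hpℓ.out).mp hdl
    have hsub : (Finset.univ.filter (fun a : G => a ^ n = 1))
        ⊆ (Finset.univ.filter (fun a : G => a ^ (ℓ ^ m) = 1)) := by
      intro a ha
      rw [Finset.mem_filter] at ha ⊢
      refine ⟨Finset.mem_univ _, ?_⟩
      have h1 : orderOf a ∣ n := orderOf_dvd_of_pow_eq_one ha.2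
      have h2 : orderOf a ∣ ℓ ^ kk := by
        rw [← hkk]
        exact orderOf_dvd_card
      have h3 : orderOf a ∣ d := Nat.dvd_gcd h1 h2
      rw [hmeq] at h3
      exact orderOf_dvd_iff_pow_eq_one.mp h3
    calc (Finset.univ.filter (fun a : G => a ^ n = 1)).card
        ≤ (Finset.univ.filter (fun a : G => a ^ (ℓ ^ m) = 1)).card := Finset.card_le_card hsub
      _ ≤ ℓ ^ m := hTm m
      _ = d := hmeq.symm
      _ ≤ n := Nat.le_of_dvd hn hdn
  exact isCyclic_of_card_pow_eq_one_le hall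

end Wrapper

end SU4Aux

/-- The special unitary group `SU_n` over a field `K` with a ring involution `star`,
realized as the subgroup of the special linear group `SL_n(K)` consisting of those `A`
with `(star A)ᵀ * A = 1`, i.e. whose matrix lies in the unitary group of `K`. -/
def specialUnitarySubgroup (n : ℕ) (K : Type) [Field K] [StarRing K] :
    Subgroup (Matrix.SpecialLinearGroup (Fin n) K) where
  carrier := {A | (A : Matrix (Fin n) (Fin n) K) ∈ unitary (Matrix (Fin n) (Fin n) K)}
  one_mem' := by
    simp only [Set.mem_setOf_eq, Matrix.SpecialLinearGroup.coe_one]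
    exact one_mem (unitary (Matrix (Fin n) (Fin n) K))
  mul_mem' := by
    intro a b ha hb
    simp only [Set.mem_setOf_eq, Matrix.SpecialLinearGroup.coe_mul] at *
    exact mul_mem ha hb
  inv_mem' := by
    intro a ha
    simp only [Set.mem_setOf_eq] at *
    have h1 : (a : Matrix (Fin n) (Fin n) K)
        * ((a⁻¹ : Matrix.SpecialLinearGroup (Fin n) K) : Matrix (Fin n) (Fin n) K) = 1 := by
      rw [← Matrix.SpecialLinearGroup.coe_mul, mul_inv_cancel,
        Matrix.SpecialLinearGroup.coe_one]
    have h2 : star (a : Matrix (Fin n) (Fin n) K) * (a : Matrix (Fin n) (Fin n) K) = 1 :=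
      (Unitary.mem_iff.mp ha).1
    have h3 : ((a⁻¹ : Matrix.SpecialLinearGroup (Fin n) K) : Matrix (Fin n) (Fin n) K)
        = star (a : Matrix (Fin n) (Fin n) K) := (left_inv_eq_right_inv h2 h1).symm
    rw [h3]
    exact Unitary.star_mem ha

open SU4Aux in
set_option maxHeartbeats 1000000 in
/-- If `ℓ` is an odd prime with `ℓ ∤ q(q² − 1)`, then the Sylow `ℓ`-subgroups of
`SU₄(q)` are cyclic.  Here `SU₄(q)` is realized inside `SL₄(K)` for `K` the field with
`q²` elements, equipped with the star operation `x ↦ x^q`. -/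
theorem sylow_cyclic_SU4
    (q ℓ : ℕ) (hq : IsPrimePow q) (hℓ : ℓ.Prime) (hodd : Odd ℓ)
    (hdvd : ¬ ℓ ∣ q * (q ^ 2 - 1))
    (K : Type) [Field K] [Fintype K] [StarRing K]
    (hK : Fintype.card K = q ^ 2) (hstar : ∀ x : K, star x = x ^ q)
    (P : Sylow ℓ ↥(specialUnitarySubgroup 4 K)) :
    IsCyclic ↥(P : Subgroup ↥(specialUnitarySubgroup 4 K)) := by
  classical
  haveI : Fact ℓ.Prime := ⟨hℓ⟩
  have hq2le : 2 ≤ q := hq.two_le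
  obtain ⟨p, k, hpp, hk0, hqeq⟩ := hq
  have hp2 : p.Prime := Nat.prime_iff.mpr hpp
  have hq1 : 1 ≤ q := by omega
  -- arithmetic consequences
  have hℓq : ¬ ℓ ∣ q := fun h => hdvd (Dvd.dvd.mul_right h _)
  have hℓq21 : ¬ ℓ ∣ q ^ 2 - 1 := fun h => hdvd (Dvd.dvd.mul_left h _)
  have hℓq1' : ¬ ℓ ∣ q + 1 := by
    intro h
    apply hℓq21
    have h2 : q ^ 2 - 1 = (q + 1) * (q - 1) := by
      have := Nat.sq_sub_sq q 1
      simpa using this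
    rw [h2]
    exact h.mul_right _
  have hℓ2 : ℓ ≠ 2 := by
    rintro rfl
    rw [Nat.odd_iff] at hodd
    omega
  have hℓ3 : ℓ ≠ 3 := by
    rintro rfl
    have h1 : q % 3 ≠ 0 := fun h => hℓq (Nat.dvd_of_mod_eq_zero h)
    have h2 : q ^ 2 % 3 = 1 := by
      rw [Nat.pow_mod]
      have h3 : q % 3 = 1 ∨ q % 3 = 2 := by omega
      rcases h3 with h3 | h3 <;> rw [h3] <;> rfl
    have h4 : 1 ≤ q ^ 2 := Nat.one_le_pow _ _ (by omega)
    exact hℓq21 (by omega)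
  have hℓ5 : 5 ≤ ℓ := by
    have h2 := hℓ.two_le
    rcases Nat.lt_or_ge ℓ 5 with h | h
    · interval_cases ℓ
      · exact absurd rfl hℓ2
      · exact absurd rfl hℓ3
      · exact absurd hℓ (by norm_num)
    · exact h
  -- characteristic
  set c := ringChar K with hc
  haveI : CharP K c := ringChar.charP K
  have hcprime : c.Prime := CharP.char_is_prime K c
  obtain ⟨n, hn⟩ := FiniteField.card K c
  have hcp : c = p := by
    have h1 : c ^ (n : ℕ) = p ^ (2 * k) := by
      rw [← hn.2, hK, ← hqeq, ← pow_mul, mul_comm k 2]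
    have h2 : c ∣ p ^ (2 * k) := h1 ▸ dvd_pow_self c (by positivity)
    have h3 : c ∣ p := hcprime.prime.dvd_of_dvd_pow h2
    exact (Nat.prime_dvd_prime_iff_eq hcprime hp2).mp h3
  haveI hKp : CharP K p := hcp ▸ ringChar.charP K
  haveI : Fact p.Prime := ⟨hp2⟩
  set L := AlgebraicClosure K with hLdef
  letI : DecidableEq L := Classical.decEq L
  set F : K →+* L := algebraMap K L with hF
  haveI : CharP L p := charP_of_injective_ringHom F.injective p
  set φ : L →+* L := iterateFrobenius L p k with hφdef
  have hφ : ∀ a : L, φ a = a ^ q := by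
    intro a
    rw [hφdef, iterateFrobenius_def, hqeq]
  have hℓL : ((ℓ : ℕ) : L) ≠ 0 := by
    intro h0
    have h1 : p ∣ ℓ := (CharP.cast_eq_zero_iff L p ℓ).mp h0
    have h2 : p = ℓ := (Nat.prime_dvd_prime_iff_eq hp2 hℓ).mp h1
    apply hℓq
    rw [← hqeq, ← h2]
    exact dvd_pow_self p (by omega)
  -- the representation
  set G := ↥(P : Subgroup ↥(specialUnitarySubgroup 4 K)) with hGdef
  let π : G →* Matrix (Fin 4) (Fin 4) K :=
  { toFun := fun g =>
      ((((g : ↥(specialUnitarySubgroup 4 K)) : Matrix.SpecialLinearGroup (Fin 4) K)) :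
        Matrix (Fin 4) (Fin 4) K)
    map_one' := rfl
    map_mul' := fun _ _ => rfl }
  have hπinj : Function.Injective π := by
    intro a b hab
    apply Subtype.ext
    apply Subtype.ext
    apply Subtype.ext
    exact hab
  have hπu : ∀ g : G, star (π g) * (π g) = 1 := by
    intro g
    have hmem : (((g : ↥(specialUnitarySubgroup 4 K)) : Matrix.SpecialLinearGroup (Fin 4) K)) ∈
        specialUnitarySubgroup 4 K := (g : ↥(specialUnitarySubgroup 4 K)).2
    have h2 : (π g) ∈ unitary (Matrix (Fin 4) (Fin 4) K) := hmem
    exact (Unitary.mem_iff.mp h2).1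
  set ψ : G →* Matrix (Fin 4) (Fin 4) L :=
    ((F.mapMatrix : Matrix (Fin 4) (Fin 4) K →+* Matrix (Fin 4) (Fin 4) L)).toMonoidHom.comp π
    with hψdef
  have hψeq : ∀ g : G, ψ g = (π g).map F := fun g => rfl
  have hψinj : Function.Injective ψ := by
    intro a b hab
    apply hπinj
    ext i j
    have h1 := congrFun (congrFun (by simpa [hψeq] using hab :
      (π a).map F = (π b).map F) i) j
    simp only [Matrix.map_apply] at h1
    exact F.injective h1
  have hψu : ∀ g : G, ((ψ g).map φ)ᵀ * (ψ g) = 1 := by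
    intro g
    have h1 : ((π g)ᵀ.map (star : K → K)) * (π g) = 1 := by
      have := hπu g
      rwa [Matrix.star_eq_conjTranspose] at this
    have h2 : (F.mapMatrix ((π g)ᵀ.map (star : K → K))) * (F.mapMatrix (π g)) = 1 := by
      rw [← _root_.map_mul, h1, _root_.map_one]
    have h3 : F.mapMatrix ((π g)ᵀ.map (star : K → K)) = ((ψ g).map φ)ᵀ := by
      ext i j
      simp only [RingHom.mapMatrix_apply, Matrix.map_apply, Matrix.transpose_apply, hψeq]
      rw [hstar, map_pow, ← hφ]
    rw [h3] at h2
    rw [RingHom.mapMatrix_apply] at h2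
    rw [← hψeq] at h2
    exact h2
  exact sylow_cyclic_of_rep ℓ q hℓ5 hq1 hℓL hℓq hℓq21 hℓq1' φ hφ P.2 ψ hψinj hψu
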